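/- Let g be a perfect Lie algebra with zero center. The holomorph h(g) is complete if and only if C(Der(g)/ad(g)) = 0. -/

import Mathlib

section HolomorphDef

variable (K : Type*) (L : Type*) [Field K] [LieRing L] [LieAlgebra K L]

/-- The bracket `[(x,d),(y,e)] = ([x,y] + d(y) - e(x), [d,e])` on `g ⊕ Der(g)`. -/
def holoBracket (h h' : L × LieDerivation K L L) : L × LieDerivation K L L :=
  (⁅h.1, h'.1⁆ + h.2 h'.1 - h'.2 h.1, ⁅h.2, h'.2⁆)

variable {K L}

lemma holoBracket_add_left (x y z : L × LieDerivation K L L) :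
    holoBracket K L (x + y) z = holoBracket K L x z + holoBracket K L y z := by
  simp only [holoBracket, Prod.ext_iff, Prod.fst_add, Prod.snd_add, add_lie,
    LieDerivation.coe_add, Pi.add_apply, map_add]
  constructor
  · abel
  · simp [add_lie]

lemma holoBracket_add_right (x y z : L × LieDerivation K L L) :
    holoBracket K L x (y + z) = holoBracket K L x y + holoBracket K L x z := by
  simp only [holoBracket, Prod.ext_iff, Prod.fst_add, Prod.snd_add, lie_add,
    LieDerivation.coe_add, Pi.add_apply, map_add]
  constructor
  · abel
  · simp [lie_add]

lemma holoBracket_self (x : L × LieDerivation K L L) : holoBracket K L x x = 0 := by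
  simp [holoBracket, Prod.ext_iff]

lemma holoBracket_leibniz (x y z : L × LieDerivation K L L) :
    holoBracket K L x (holoBracket K L y z) =
      holoBracket K L (holoBracket K L x y) z + holoBracket K L y (holoBracket K L x z) := by
  simp only [holoBracket, Prod.ext_iff, Prod.fst_add, Prod.snd_add,
    LieDerivation.commutator_apply, map_add, map_sub, lie_add, lie_sub, add_lie, sub_lie,
    LieDerivation.apply_lie_eq_add]
  constructor
  · rw [leibniz_lie x.1 y.1 z.1, ← lie_skew (z.2 x.1) y.1]
    abel
  · rw [leibniz_lie]

lemma holoBracket_smul (t : K) (x y : L × LieDerivation K L L) :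
    holoBracket K L x (t • y) = t • holoBracket K L x y := by
  refine Prod.ext ?_ ?_
  · simp [holoBracket, smul_add, smul_sub]
  · exact lie_smul t x.2 y.2

variable (K L)

/-- The holomorph `h(g) = g ⋊ Der(g)` of a Lie algebra `g`: as a vector space it is
the direct sum `g ⊕ Der(g)`. -/
def Holomorph := L × LieDerivation K L L

namespace Holomorph

instance : AddCommGroup (Holomorph K L) :=
  inferInstanceAs (AddCommGroup (L × LieDerivation K L L))

instance : Module K (Holomorph K L) :=
  inferInstanceAs (Module K (L × LieDerivation K L L))

instance : LieRing (Holomorph K L) where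
  bracket h h' := holoBracket K L h h'
  add_lie := holoBracket_add_left
  lie_add := holoBracket_add_right
  lie_self := holoBracket_self
  leibniz_lie := holoBracket_leibniz

instance : LieAlgebra K (Holomorph K L) where
  lie_smul := holoBracket_smul

variable {K L}

/-- The element `(x, d)` (also written `x + d`) of the holomorph. -/
def mk (x : L) (d : LieDerivation K L L) : Holomorph K L := (x, d)

/-- The `g`-component of an element of the holomorph. -/
def fst (h : Holomorph K L) : L := (show L × LieDerivation K L L from h).1

/-- The `Der(g)`-component of an element of the holomorph. -/
def snd (h : Holomorph K L) : LieDerivation K L L := (show L × LieDerivation K L L from h).2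

@[simp] lemma fst_mk (x : L) (d : LieDerivation K L L) : (mk x d).fst = x := rfl
@[simp] lemma snd_mk (x : L) (d : LieDerivation K L L) : (mk x d).snd = d := rfl

lemma ext {h h' : Holomorph K L} (h1 : h.fst = h'.fst) (h2 : h.snd = h'.snd) : h = h' :=
  Prod.ext h1 h2

/-- The bracket of the holomorph is `[(x,d),(y,e)] = ([x,y] + d(y) - e(x), [d,e])`. -/
lemma bracket_def (x y : L) (d e : LieDerivation K L L) :
    ⁅mk x d, mk y e⁆ = mk (⁅x, y⁆ + d y - e x) ⁅d, e⁆ := rfl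

end Holomorph

end HolomorphDef

/-- A Lie algebra is complete if its center is zero and every derivation is inner. -/
def IsCompleteLieAlgebra (K : Type*) (M : Type*) [Field K] [LieRing M] [LieAlgebra K M] : Prop :=
  LieAlgebra.center K M = ⊥ ∧
    ∀ D : LieDerivation K M M, ∃ m : M, D = LieDerivation.ad K M m


section Aux

variable {K : Type*} {L : Type*} [Field K] [LieRing L] [LieAlgebra K L]

namespace Holomorph

@[simp] lemma fst_add (h h' : Holomorph K L) : (h + h').fst = h.fst + h'.fst := rfl
@[simp] lemma snd_add (h h' : Holomorph K L) : (h + h').snd = h.snd + h'.snd := rfl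
@[simp] lemma fst_zero : (0 : Holomorph K L).fst = 0 := rfl
@[simp] lemma snd_zero : (0 : Holomorph K L).snd = 0 := rfl
@[simp] lemma fst_smul (t : K) (h : Holomorph K L) : (t • h).fst = t • h.fst := rfl
@[simp] lemma snd_smul (t : K) (h : Holomorph K L) : (t • h).snd = t • h.snd := rfl
@[simp] lemma fst_bracket (h h' : Holomorph K L) :
    (⁅h, h'⁆ : Holomorph K L).fst = ⁅h.fst, h'.fst⁆ + h.snd h'.fst - h'.snd h.fst := rfl
@[simp] lemma snd_bracket (h h' : Holomorph K L) :
    (⁅h, h'⁆ : Holomorph K L).snd = ⁅h.snd, h'.snd⁆ := rfl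

@[simp] lemma fst_sub (h h' : Holomorph K L) : (h - h').fst = h.fst - h'.fst := rfl
@[simp] lemma snd_sub (h h' : Holomorph K L) : (h - h').snd = h.snd - h'.snd := rfl

lemma eta (h : Holomorph K L) : mk h.fst h.snd = h := rfl

lemma mk_add_mk (x y : L) (d e : LieDerivation K L L) :
    mk x d + mk y e = mk (x + y) (d + e) := rfl

variable (K L) in
/-- The projection onto the first component, as a linear map. -/
def fstₗ : Holomorph K L →ₗ[K] L where
  toFun := fst
  map_add' _ _ := rfl
  map_smul' _ _ := rfl

variable (K L) in
/-- The projection onto the second component, as a linear map. -/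
def sndₗ : Holomorph K L →ₗ[K] LieDerivation K L L where
  toFun := snd
  map_add' _ _ := rfl
  map_smul' _ _ := rfl

variable (K L) in
/-- The inclusion of `L` into the holomorph, as a linear map. -/
def inlₕ : L →ₗ[K] Holomorph K L where
  toFun y := mk y 0
  map_add' y z := Holomorph.ext rfl (add_zero (0 : LieDerivation K L L)).symm
  map_smul' t y := Holomorph.ext rfl (smul_zero t).symm

variable (K L) in
/-- The inclusion of `Der(L)` into the holomorph, as a linear map. -/
def inrₕ : LieDerivation K L L →ₗ[K] Holomorph K L where
  toFun e := mk 0 e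
  map_add' d e := Holomorph.ext (add_zero (0 : L)).symm rfl
  map_smul' t e := Holomorph.ext (smul_zero t).symm rfl

@[simp] lemma fstₗ_apply (h : Holomorph K L) : fstₗ K L h = h.fst := rfl
@[simp] lemma sndₗ_apply (h : Holomorph K L) : sndₗ K L h = h.snd := rfl
@[simp] lemma inlₕ_apply (y : L) : inlₕ K L y = mk y 0 := rfl
@[simp] lemma inrₕ_apply (e : LieDerivation K L L) : inrₕ K L e = mk 0 e := rfl

/-- The center of the holomorph is trivial whenever the center of `L` is. -/
lemma center_eq_bot (hc : LieAlgebra.center K L = ⊥) :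
    LieAlgebra.center K (Holomorph K L) = ⊥ := by
  rw [eq_bot_iff]
  intro h hcen
  rw [LieSubmodule.mem_bot]
  rw [LieModule.mem_maxTrivSubmodule] at hcen
  have hx : h.fst = 0 := by
    have hmem : h.fst ∈ LieAlgebra.center K L := by
      rw [LieModule.mem_maxTrivSubmodule]
      intro z
      have h0 := congrArg Holomorph.fst (hcen (mk 0 (LieDerivation.ad K L z)))
      simpa using h0
    rw [hc, LieSubmodule.mem_bot] at hmem
    exact hmem
  have hd : h.snd = 0 := by
    ext y
    have h0 := congrArg Holomorph.fst (hcen (mk y 0))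
    simpa [hx] using h0
  exact Holomorph.ext hx hd

/-- A linear map `P : Der(L) → L` satisfying the cocycle identity
`P ⁅e, f⁆ = e (P f) - f (P e)` gives rise to the derivation
`(y, e) ↦ (P e, - ad (P e))` of the holomorph. -/
def ofCocycle (P : LieDerivation K L L →ₗ[K] L)
    (hP : ∀ e f : LieDerivation K L L, P ⁅e, f⁆ = e (P f) - f (P e)) :
    LieDerivation K (Holomorph K L) (Holomorph K L) where
  toLinearMap :=
    { toFun := fun h => mk (P h.snd) (-(LieDerivation.ad K L (P h.snd)))
      map_add' := fun h h' => by
        apply Holomorph.ext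
        · simp
        · simp only [snd_add, snd_mk, LinearMap.map_add, map_add, neg_add]
      map_smul' := fun t h => by
        apply Holomorph.ext <;> simp }
  leibniz' := fun a b => by
    apply Holomorph.ext
    · simp only [LinearMap.coe_mk, AddHom.coe_mk, fst_sub, fst_bracket, snd_bracket,
        fst_mk, snd_mk, LieDerivation.coe_neg, Pi.neg_apply,
        LieDerivation.ad_apply_apply, sub_neg_eq_add]
      rw [hP, ← lie_skew (P b.snd) a.fst, ← lie_skew (P a.snd) b.fst]
      abel
    · simp only [LinearMap.coe_mk, AddHom.coe_mk, snd_sub, snd_bracket, snd_mk]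
      rw [hP, map_sub, lie_neg, lie_neg, LieDerivation.lie_der_ad_eq_ad_der,
        LieDerivation.lie_der_ad_eq_ad_der]
      abel

/-- Decomposition of an element of the holomorph. -/
lemma mk_fst_add_mk_snd (h : Holomorph K L) : mk h.fst 0 + mk 0 h.snd = h := by
  apply Holomorph.ext <;> simp

@[simp] lemma bracket_mk_mk_left (y z : L) :
    (⁅mk y (0 : LieDerivation K L L), mk z (0 : LieDerivation K L L)⁆ : Holomorph K L) =
      mk ⁅y, z⁆ 0 := by
  apply Holomorph.ext <;> simp

@[simp] lemma bracket_mk_mk_mixed (e : LieDerivation K L L) (y : L) :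
    (⁅mk (0 : L) e, mk y (0 : LieDerivation K L L)⁆ : Holomorph K L) = mk (e y) 0 := by
  apply Holomorph.ext <;> simp

@[simp] lemma bracket_mk_mk_right (e f : LieDerivation K L L) :
    (⁅mk (0 : L) e, mk (0 : L) f⁆ : Holomorph K L) = mk 0 ⁅e, f⁆ := by
  apply Holomorph.ext <;> simp

section OfDerivation

variable (D : LieDerivation K (Holomorph K L) (Holomorph K L))

/-- The map `e ↦ fst (D (0, e))` associated with a derivation `D` of the holomorph. -/
def Pmap : LieDerivation K L L →ₗ[K] L :=
  fstₗ K L ∘ₗ D.toLinearMap ∘ₗ inrₕ K L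

@[simp] lemma Pmap_apply (e : LieDerivation K L L) : Pmap D e = (D (mk 0 e)).fst := rfl

/-- The map `y ↦ snd (D (y, 0))` associated with a derivation `D` of the holomorph. -/
def Bmap : L →ₗ[K] LieDerivation K L L :=
  sndₗ K L ∘ₗ D.toLinearMap ∘ₗ inlₕ K L

@[simp] lemma Bmap_apply (y : L) : Bmap D y = (D (mk y 0)).snd := rfl

lemma Bmap_bracket (y z : L) : Bmap D ⁅y, z⁆ = 0 := by
  have e2 := D.apply_lie_eq_sub (mk y 0) (mk z 0)
  rw [bracket_mk_mk_left] at e2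
  have e3 := congrArg Holomorph.snd e2
  simpa using e3

/-- If `L` is perfect, the `Bmap` of a derivation of the holomorph vanishes. -/
lemma Bmap_eq_zero (hperf : ⁅(⊤ : LieIdeal K L), (⊤ : LieIdeal K L)⁆ = ⊤) (y : L) :
    (D (mk y 0)).snd = 0 := by
  let N : LieIdeal K L :=
    { LinearMap.ker (Bmap D) with
      lie_mem := fun {x z} _ => LinearMap.mem_ker.mpr (Bmap_bracket D x z) }
  have hN : (⊤ : LieIdeal K L) ≤ N := by
    rw [← hperf, LieSubmodule.lieIdeal_oper_eq_span, LieSubmodule.lieSpan_le]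
    rintro m ⟨⟨x, -⟩, ⟨z, -⟩, rfl⟩
    exact LinearMap.mem_ker.mpr (Bmap_bracket D x z)
  have hy : y ∈ N := hN (LieSubmodule.mem_top y)
  simpa using LinearMap.mem_ker.mp hy

/-- The first-component restriction of a derivation of the holomorph is a derivation of `L`. -/
def Amap (hB : ∀ y : L, (D (mk y 0)).snd = 0) : LieDerivation K L L where
  toLinearMap := fstₗ K L ∘ₗ D.toLinearMap ∘ₗ inlₕ K L
  leibniz' y z := by
    have e2 := D.apply_lie_eq_sub (mk y 0) (mk z 0)
    rw [bracket_mk_mk_left] at e2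
    have e3 := congrArg Holomorph.fst e2
    simpa [hB, LieDerivation.coeFn_coe] using e3

@[simp] lemma Amap_apply (hB : ∀ y : L, (D (mk y 0)).snd = 0) (y : L) :
    Amap D hB y = (D (mk y 0)).fst := rfl

/-- The cocycle identity for `Pmap`. -/
lemma Pmap_cocycle (e f : LieDerivation K L L) :
    Pmap D ⁅e, f⁆ = e (Pmap D f) - f (Pmap D e) := by
  have e2 := D.apply_lie_eq_sub (mk 0 e) (mk 0 f)
  rw [bracket_mk_mk_right] at e2
  have e3 := congrArg Holomorph.fst e2
  simpa using e3

/-- The relation between the `snd` component of `D (0, e)` and the other data. -/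
lemma snd_rel (hB : ∀ y : L, (D (mk y 0)).snd = 0) (e : LieDerivation K L L) (y : L) :
    (D (mk 0 e)).snd y =
      (D (mk (e y) 0)).fst - e ((D (mk y 0)).fst) + ⁅y, (D (mk 0 e)).fst⁆ := by
  have e2 := D.apply_lie_eq_sub (mk 0 e) (mk y 0)
  rw [bracket_mk_mk_mixed] at e2
  have e3 := congrArg Holomorph.fst e2
  simp only [fst_sub, fst_bracket, fst_mk, snd_mk, hB y, LieDerivation.coe_zero,
    Pi.zero_apply, zero_lie, zero_add, sub_zero, zero_sub, map_zero] at e3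
  rw [e3]
  abel

/-- The derivation `z ↦ Pmap D (ad z)`. -/
def Tmap : LieDerivation K L L where
  toLinearMap := Pmap D ∘ₗ (LieDerivation.ad K L).toLinearMap
  leibniz' y z := by
    simp only [LinearMap.comp_apply, LieHom.coe_toLinearMap]
    rw [LieHom.map_lie, Pmap_cocycle]
    simp [LieDerivation.ad_apply_apply]

@[simp] lemma Tmap_apply (z : L) : Tmap D z = Pmap D (LieDerivation.ad K L z) := rfl

lemma lie_Tmap (e : LieDerivation K L L) :
    ⁅Tmap D, e⁆ = LieDerivation.ad K L (Pmap D e) := by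
  ext z
  rw [LieDerivation.commutator_apply]
  have h1 : Tmap D (e z) = Pmap D ⁅e, LieDerivation.ad K L z⁆ := by
    rw [Tmap_apply, LieDerivation.lie_der_ad_eq_ad_der]
  rw [h1, Pmap_cocycle]
  simp [LieDerivation.ad_apply_apply, ← lie_skew (Pmap D e) z]

end OfDerivation

end Holomorph

end Aux


section MainLemmas

variable {K : Type*} {L : Type*} [Field K] [LieRing L] [LieAlgebra K L]

open Holomorph in
/-- Backward direction: if the outer derivation algebra has trivial center, the holomorph
is complete. -/
lemma isComplete_holomorph_of_center_outer
    (hperf : ⁅(⊤ : LieIdeal K L), (⊤ : LieIdeal K L)⁆ = ⊤)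
    (hc : LieAlgebra.center K L = ⊥)
    (hout : LieAlgebra.center K
      (LieDerivation K L L ⧸ (LieDerivation.ad K L).idealRange) = ⊥) :
    IsCompleteLieAlgebra K (Holomorph K L) := by
  refine ⟨Holomorph.center_eq_bot hc, fun D => ?_⟩
  have hinj := LieDerivation.injective_ad_of_center_eq_bot (R := K) hc
  have hB := Bmap_eq_zero D hperf
  have hTmem : Tmap D ∈ (LieDerivation.ad K L).idealRange := by
    have hcent : LieSubmodule.Quotient.mk' _ (Tmap D) ∈
        LieAlgebra.center K (LieDerivation K L L ⧸ (LieDerivation.ad K L).idealRange) := by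
      rw [LieModule.mem_maxTrivSubmodule]
      intro η
      obtain ⟨e, rfl⟩ := LieSubmodule.Quotient.surjective_mk' _ η
      have hmem : (⁅e, Tmap D⁆ : LieDerivation K L L) ∈
          (LieDerivation.ad K L).idealRange := by
        rw [← lie_skew, lie_Tmap]
        exact neg_mem (LieDerivation.mem_ad_idealRange_iff.mpr ⟨_, rfl⟩)
      have hbr : (⁅LieSubmodule.Quotient.mk' (LieDerivation.ad K L).idealRange e,
            LieSubmodule.Quotient.mk' (LieDerivation.ad K L).idealRange (Tmap D)⁆ :
            LieDerivation K L L ⧸ (LieDerivation.ad K L).idealRange) =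
          LieSubmodule.Quotient.mk' (LieDerivation.ad K L).idealRange ⁅e, Tmap D⁆ := rfl
      rw [hbr, LieSubmodule.Quotient.mk_eq_zero]
      exact hmem
    rw [hout, LieSubmodule.mem_bot] at hcent
    rwa [LieSubmodule.Quotient.mk_eq_zero] at hcent
  obtain ⟨x, hx⟩ := LieDerivation.mem_ad_idealRange_iff.mp hTmem
  have hPe : ∀ e : LieDerivation K L L, Pmap D e = -(e x) := by
    intro e
    apply hinj
    rw [← lie_Tmap, ← hx, ← lie_skew, LieDerivation.lie_der_ad_eq_ad_der, map_neg]
  refine ⟨Holomorph.mk x (Amap D hB - LieDerivation.ad K L x), ?_⟩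
  apply LieDerivation.ext
  intro h
  conv_lhs => rw [← mk_fst_add_mk_snd h, map_add]
  rw [LieDerivation.ad_apply_apply]
  apply Holomorph.ext
  · simp only [fst_add, fst_bracket, fst_mk, snd_mk, LieDerivation.coe_sub, Pi.sub_apply,
      LieDerivation.ad_apply_apply]
    have h1 : (D (mk 0 h.snd)).fst = -(h.snd x) := by
      rw [← Pmap_apply, hPe]
    have h2 : (Amap D hB) h.fst = (D (mk h.fst 0)).fst := rfl
    rw [h1, ← h2]
    abel
  · simp only [snd_add, snd_bracket, fst_mk, snd_mk, hB h.fst, zero_add]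
    ext z
    rw [snd_rel D hB h.snd z, LieDerivation.commutator_apply]
    have h1 : (D (mk 0 h.snd)).fst = -(h.snd x) := by
      rw [← Pmap_apply, hPe]
    have h2 : ∀ y, (Amap D hB) y = (D (mk y 0)).fst := fun _ => rfl
    simp only [h1, LieDerivation.coe_sub, Pi.sub_apply, LieDerivation.ad_apply_apply, h2,
      map_sub, LieDerivation.apply_lie_eq_add h.snd x z, lie_neg]
    rw [← lie_skew (h.snd x) z]
    abel

open Holomorph in
/-- Forward direction: if the holomorph is complete, the outer derivation algebra has
trivial center. -/
lemma center_outer_of_isComplete_holomorph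
    (hc : LieAlgebra.center K L = ⊥)
    (hcomp : IsCompleteLieAlgebra K (Holomorph K L)) :
    LieAlgebra.center K (LieDerivation K L L ⧸ (LieDerivation.ad K L).idealRange) = ⊥ := by
  rw [eq_bot_iff]
  intro ξ hξ
  rw [LieSubmodule.mem_bot]
  obtain ⟨T, rfl⟩ := LieSubmodule.Quotient.surjective_mk' _ ξ
  rw [LieModule.mem_maxTrivSubmodule] at hξ
  have hinj := LieDerivation.injective_ad_of_center_eq_bot (R := K) hc
  have hT : ∀ e : LieDerivation K L L, ∃ x : L, LieDerivation.ad K L x = ⁅T, e⁆ := by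
    intro e
    rw [← LieDerivation.mem_ad_idealRange_iff]
    have h0 := hξ (LieSubmodule.Quotient.mk' _ e)
    have hbr : (⁅LieSubmodule.Quotient.mk' (LieDerivation.ad K L).idealRange e,
          LieSubmodule.Quotient.mk' (LieDerivation.ad K L).idealRange T⁆ :
          LieDerivation K L L ⧸ (LieDerivation.ad K L).idealRange) =
        LieSubmodule.Quotient.mk' (LieDerivation.ad K L).idealRange ⁅e, T⁆ := rfl
    rw [hbr, LieSubmodule.Quotient.mk_eq_zero] at h0
    rw [← lie_skew]
    exact neg_mem h0
  choose φ hφ using hT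
  have hφadd : ∀ e f, φ (e + f) = φ e + φ f := by
    intro e f
    apply hinj
    rw [hφ, map_add, hφ, hφ, lie_add]
  have hφsmul : ∀ (t : K) e, φ (t • e) = t • φ e := by
    intro t e
    apply hinj
    rw [hφ, map_smul, hφ]
    exact lie_smul t T e
  let P : LieDerivation K L L →ₗ[K] L :=
    { toFun := φ, map_add' := hφadd, map_smul' := hφsmul }
  have hφ' : ∀ e, LieDerivation.ad K L (P e) = ⁅T, e⁆ := hφ
  have hP : ∀ e f : LieDerivation K L L, P ⁅e, f⁆ = e (P f) - f (P e) := by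
    intro e f
    apply hinj
    rw [hφ', map_sub, ← LieDerivation.lie_der_ad_eq_ad_der,
      ← LieDerivation.lie_der_ad_eq_ad_der, hφ', hφ', leibniz_lie T e f,
      ← lie_skew ⁅T, e⁆ f]
    abel
  obtain ⟨m, hm⟩ := hcomp.2 (ofCocycle P hP)
  have h1 : ∀ e : LieDerivation K L L, P e = -(e m.fst) := by
    intro e
    have h2 := DFunLike.congr_fun hm (mk 0 e)
    have h3 := congrArg Holomorph.fst h2
    simpa [ofCocycle, LieDerivation.ad_apply_apply] using h3
  have hTad : T = LieDerivation.ad K L m.fst := by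
    apply LieDerivation.ext
    intro z
    have h4 : P (LieDerivation.ad K L z) = T z := by
      apply hinj
      rw [hφ', LieDerivation.lie_der_ad_eq_ad_der]
    rw [← h4, h1, LieDerivation.ad_apply_apply, LieDerivation.ad_apply_apply,
      ← lie_skew z m.fst, neg_neg]
  rw [LieSubmodule.Quotient.mk_eq_zero]
  exact LieDerivation.mem_ad_idealRange_iff.mpr ⟨m.fst, hTad.symm⟩

end MainLemmas

/-- Let `g` be perfect with zero center. The holomorph `h(g)` is complete if and only
if the outer derivation algebra `Der(g)/ad(g)` has zero center. -/
theorem holomorph_isComplete_iff_center_outer_eq_bot (K : Type*) (L : Type*) [Field K]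
    [LieRing L] [LieAlgebra K L] (hperf : ⁅(⊤ : LieIdeal K L), (⊤ : LieIdeal K L)⁆ = ⊤)
    (hc : LieAlgebra.center K L = ⊥) :
    IsCompleteLieAlgebra K (Holomorph K L) ↔
      LieAlgebra.center K (LieDerivation K L L ⧸ (LieDerivation.ad K L).idealRange) = ⊥ :=
  ⟨center_outer_of_isComplete_holomorph hc,
    isComplete_holomorph_of_center_outer hperf hc⟩
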